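/- If a_n = c · μ^n · κ^{n^σ} · n^g with μ > 0, 0 < κ < 1, 0 < σ < 1, then the modified ratio r_n^{(1)} = n r_n − (n−1) r_{n−1}, where r_n = a_n/a_{n−1}, satisfies r_n^{(1)} = μ(1 + σ² log(κ) n^{σ−1} + o(n^{σ-1}) + o(1/n)); in particular the O(1/n) term (coming from n^g) is eliminated. -/

import Mathlib

open Filter Real Topology

lemma mra_deriv_rpow_aff (q b c x : ℝ) (h : b - c*x ≠ 0) :
    HasDerivAt (fun t : ℝ => (b - c*t) ^ q) (-(c * (q * (b - c*x) ^ (q-1)))) x := by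
  have h2 : HasDerivAt (fun t : ℝ => b - c*t) (-c) x := by
    simpa using ((hasDerivAt_id x).const_mul c).const_sub b
  have h1 : HasDerivAt (fun y : ℝ => y ^ q) (q * (b - c*x) ^ (q-1)) (b - c*x) :=
    Real.hasDerivAt_rpow_const (Or.inl h)
  have := h1.comp x h2
  simpa [Function.comp_def, mul_comm] using this

/-- slope limit for rpow at 1 -/
lemma mra_slope_rpow (q c : ℝ) :
    Tendsto (fun t : ℝ => ((1 - c*t) ^ q - 1)/t) (𝓝[>] (0:ℝ)) (𝓝 (-(c*q))) := by
  have h3 : HasDerivAt (fun t : ℝ => (1 - c*t) ^ q) (-(c*q)) 0 := by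
    have := mra_deriv_rpow_aff q 1 c 0 (by norm_num)
    simpa [Real.one_rpow] using this
  have h4 := hasDerivAt_iff_tendsto_slope.mp h3
  have h5 : Tendsto (slope (fun t : ℝ => (1 - c*t) ^ q) 0) (𝓝[>] (0:ℝ)) (𝓝 (-(c*q))) :=
    h4.mono_left (nhdsWithin_mono _ (fun x hx => ne_of_gt hx))
  refine h5.congr fun t => ?_
  rw [slope_def_field]
  simp [div_eq_mul_inv]

/-- slope limit for log at 1 -/
lemma mra_slope_log :
    Tendsto (fun t : ℝ => Real.log (1 - t)/t) (𝓝[>] (0:ℝ)) (𝓝 (-1)) := by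
  have h3 : HasDerivAt (fun t : ℝ => Real.log (1 - t)) (-1) 0 := by
    have h2 : HasDerivAt (fun t : ℝ => 1 - t) (-1) 0 := by
      simpa using (hasDerivAt_id (0:ℝ)).const_sub 1
    have h1 : HasDerivAt Real.log (1:ℝ)⁻¹ ((fun t : ℝ => 1 - t) 0) := by
      simpa using Real.hasDerivAt_log one_ne_zero
    have := h1.comp 0 h2
    simpa [Function.comp_def] using this
  have h4 := hasDerivAt_iff_tendsto_slope.mp h3
  have h5 := h4.mono_left
    (nhdsWithin_mono _ (fun x (hx : x ∈ Set.Ioi (0:ℝ)) => ne_of_gt hx))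
  refine h5.congr fun t => ?_
  rw [slope_def_field]
  simp [div_eq_mul_inv]

/-- L'Hopital: second-difference quotient -/
lemma mra_lhopital {σ : ℝ} (hσ0 : 0 < σ) (hσ1 : σ < 1) :
    Tendsto (fun t : ℝ => (1 - 2*(1-t)^σ + (1-2*t)^σ)/t^2) (𝓝[>] (0:ℝ))
      (𝓝 (σ*(σ-1))) := by
  have hI : Set.Ioo (0:ℝ) (1/4) ∈ 𝓝[>] (0:ℝ) := Ioo_mem_nhdsGT (by norm_num)
  have hderiv : ∀ x ∈ Set.Ioo (0:ℝ) (1/4),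
      HasDerivAt (fun t : ℝ => 1 - 2*(1-t)^σ + (1-2*t)^σ)
        (2*σ*(1-x)^(σ-1) - 2*σ*(1-2*x)^(σ-1)) x := by
    intro x hx
    have hx1 : (1:ℝ) - 1*x ≠ 0 := by nlinarith [hx.1, hx.2]
    have hx2 : (1:ℝ) - 2*x ≠ 0 := by nlinarith [hx.1, hx.2]
    have d1 : HasDerivAt (fun t : ℝ => (1-t)^σ) (-(σ*(1-x)^(σ-1))) x := by
      simpa using mra_deriv_rpow_aff σ 1 1 x hx1
    have d2 := mra_deriv_rpow_aff σ 1 2 x hx2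
    have h := ((d1.const_mul 2).const_sub 1).add d2
    refine h.congr_deriv ?_
    ring
  refine HasDerivAt.lhopital_zero_nhdsGT
    (f' := fun x => 2*σ*(1-x)^(σ-1) - 2*σ*(1-2*x)^(σ-1)) (g' := fun x => 2*x)
    (Filter.mem_of_superset hI hderiv)
    (Filter.mem_of_superset hI (fun x _ => by
      simpa using hasDerivAt_pow 2 x))
    ?_ ?_ ?_ ?_
  · -- g' ≠ 0
    refine Filter.mem_of_superset hI (fun x hx => ?_)
    have h1 := hx.1
    show 2*x ≠ 0
    positivity
  · -- f → 0
    have hc : ContinuousAt (fun t : ℝ => 1 - 2*(1-t)^σ + (1-2*t)^σ) 0 := by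
      have c1 : ContinuousAt (fun t : ℝ => (1-t)^σ) 0 := by
        have h := (Real.continuousAt_rpow_const 1 σ (Or.inl one_ne_zero))
        have hs : ContinuousAt (fun t : ℝ => 1 - t) 0 := by fun_prop
        have := ContinuousAt.comp (x := (0:ℝ)) (g := fun y : ℝ => y ^ σ)
          (f := fun t : ℝ => 1 - t) (by simpa using h) hs
        simpa [Function.comp_def] using this
      have c2 : ContinuousAt (fun t : ℝ => (1-2*t)^σ) 0 := by
        have h := (Real.continuousAt_rpow_const 1 σ (Or.inl one_ne_zero))
        have hs : ContinuousAt (fun t : ℝ => 1 - 2*t) 0 := by fun_prop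
        have := ContinuousAt.comp (x := (0:ℝ)) (g := fun y : ℝ => y ^ σ)
          (f := fun t : ℝ => 1 - 2*t) (by simpa using h) hs
        simpa [Function.comp_def] using this
      exact ((c1.const_mul 2).const_sub 1).add c2
    have h2 : Tendsto (fun t : ℝ => 1 - 2*(1-t)^σ + (1-2*t)^σ) (𝓝[>] (0:ℝ))
        (𝓝 (1 - 2*(1-(0:ℝ))^σ + (1-2*(0:ℝ))^σ)) :=
      hc.tendsto.mono_left nhdsWithin_le_nhds
    norm_num [Real.one_rpow] at h2
    exact h2
  · -- g → 0
    have : Tendsto (fun t : ℝ => t^2) (𝓝 (0:ℝ)) (𝓝 0) := by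
      simpa using (continuous_pow 2).tendsto (0:ℝ)
    exact this.mono_left nhdsWithin_le_nhds
  · -- f'/g' → σ(σ-1)
    have h1 := mra_slope_rpow (σ-1) 1
    have h2 := mra_slope_rpow (σ-1) 2
    have h3 := (h1.sub h2).const_mul σ
    have heq : Tendsto (fun t : ℝ =>
        σ * (((1 - 1*t)^(σ-1) - 1)/t - ((1 - 2*t)^(σ-1) - 1)/t)) (𝓝[>] (0:ℝ))
        (𝓝 (σ*(σ-1))) := by
      convert h3 using 2
      ring
    refine heq.congr' ?_
    filter_upwards [self_mem_nhdsWithin] with t (ht : 0 < t)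
    have ht' : t ≠ 0 := ne_of_gt ht
    field_simp
    ring


noncomputable def mraD (σ : ℝ) (m : ℕ) : ℝ := (m:ℝ)^σ - ((m:ℝ)-1)^σ
noncomputable def mraL (m : ℕ) : ℝ := Real.log ((m:ℝ)/((m:ℝ)-1))
noncomputable def mraPs (σ L g : ℝ) (m : ℕ) : ℝ := L * mraD σ m + g * mraL m
noncomputable def mraPh (σ L g : ℝ) (m : ℕ) : ℝ := Real.exp (mraPs σ L g m)

lemma mra_T : Tendsto (fun n : ℕ => 1/(n:ℝ)) atTop (𝓝[>] (0:ℝ)) := by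
  refine tendsto_nhdsWithin_of_tendsto_nhds_of_eventually_within _
    tendsto_one_div_atTop_nhds_zero_nat ?_
  filter_upwards [eventually_ge_atTop 1] with n hn
  have : (0:ℝ) < (n:ℝ) := by exact_mod_cast Nat.lt_of_lt_of_le Nat.zero_lt_one hn
  exact one_div_pos.mpr this

lemma mra_inv_nat : Tendsto (fun n : ℕ => 1/(n:ℝ)) atTop (𝓝 0) :=
  tendsto_one_div_atTop_nhds_zero_nat

lemma mra_pow_neg (y : ℝ) (hy : 0 < y) :
    Tendsto (fun n : ℕ => (n:ℝ)^(-y)) atTop (𝓝 0) :=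
  (tendsto_rpow_neg_atTop hy).comp tendsto_natCast_atTop_atTop

/-- `n^(1-σ) * (n^σ - (n-1)^σ) → σ` -/
lemma mra_lim_S {σ : ℝ} (hσ0 : 0 < σ) (hσ1 : σ < 1) :
    Tendsto (fun n : ℕ => (n:ℝ)^(1-σ) * mraD σ n) atTop (𝓝 σ) := by
  have h := ((mra_slope_rpow σ 1).comp mra_T).neg
  rw [show -(-(1*σ)) = σ by ring] at h
  refine h.congr' ?_
  filter_upwards [eventually_ge_atTop 1] with n hn
  have hn0 : (0:ℝ) < (n:ℝ) := by exact_mod_cast hn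
  have hn0' : (n:ℝ) ≠ 0 := ne_of_gt hn0
  have he : ((n:ℝ)-1) = (n:ℝ) * (1 - 1*(1/(n:ℝ))) := by field_simp
  have hnn : (0:ℝ) ≤ 1 - 1*(1/(n:ℝ)) := by
    rw [one_mul]
    have : 1/(n:ℝ) ≤ 1 := by
      rw [div_le_one hn0]; exact_mod_cast hn
    linarith
  show -(((1 - 1*(1/(n:ℝ)))^σ - 1)/(1/(n:ℝ))) = (n:ℝ)^(1-σ) * mraD σ n
  rw [mraD, he, Real.mul_rpow (le_of_lt hn0) hnn]
  have h2 : (n:ℝ)^(1-σ) * (n:ℝ)^σ = (n:ℝ) := by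
    rw [← Real.rpow_add hn0]
    norm_num
  rw [mul_sub, ← mul_assoc, h2]
  field_simp
  ring

/-- `n * log(n/(n-1)) → 1` -/
lemma mra_lim_lmul : Tendsto (fun n : ℕ => (n:ℝ) * mraL n) atTop (𝓝 1) := by
  have h := (mra_slope_log.comp mra_T).neg
  rw [show -(-1 : ℝ) = 1 by ring] at h
  refine h.congr' ?_
  filter_upwards [eventually_ge_atTop 2] with n hn
  have hn0 : (0:ℝ) < (n:ℝ) := by
    have : (2:ℝ) ≤ (n:ℝ) := by exact_mod_cast hn
    linarith
  have hn1 : (0:ℝ) < (n:ℝ) - 1 := by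
    have : (2:ℝ) ≤ (n:ℝ) := by exact_mod_cast hn
    linarith
  show -(Real.log (1 - 1/(n:ℝ))/(1/(n:ℝ))) = (n:ℝ) * mraL n
  have he : (n:ℝ)/((n:ℝ)-1) = (1 - 1/(n:ℝ))⁻¹ := by
    have h1 : ((n:ℝ)-1) ≠ 0 := ne_of_gt hn1
    have h2 : (n:ℝ) ≠ 0 := ne_of_gt hn0
    field_simp
  rw [mraL, he, Real.log_inv]
  field_simp


lemma mra_rpow_inv_neg {x : ℝ} (hx : 0 < x) (p : ℝ) : x^p * x^(-p) = 1 := by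
  rw [← Real.rpow_add hx]; norm_num

lemma mra_lim_d0 {σ : ℝ} (hσ0 : 0 < σ) (hσ1 : σ < 1) :
    Tendsto (fun n : ℕ => mraD σ n) atTop (𝓝 0) := by
  have h := (mra_lim_S hσ0 hσ1).mul (mra_pow_neg (1-σ) (by linarith))
  rw [mul_zero] at h
  refine h.congr' ?_
  filter_upwards [eventually_ge_atTop 1] with n hn
  have hn0 : (0:ℝ) < (n:ℝ) := by exact_mod_cast Nat.lt_of_lt_of_le Nat.zero_lt_one hn
  show (n:ℝ)^(1-σ) * mraD σ n * (n:ℝ)^(-(1-σ)) = mraD σ n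
  have := mra_rpow_inv_neg hn0 (1-σ)
  calc (n:ℝ)^(1-σ) * mraD σ n * (n:ℝ)^(-(1-σ))
      = ((n:ℝ)^(1-σ) * (n:ℝ)^(-(1-σ))) * mraD σ n := by ring
    _ = mraD σ n := by rw [this, one_mul]

lemma mra_lim_l0 : Tendsto (fun n : ℕ => mraL n) atTop (𝓝 0) := by
  have h := mra_lim_lmul.mul mra_inv_nat
  rw [mul_zero] at h
  refine h.congr' ?_
  filter_upwards [eventually_ge_atTop 1] with n hn
  have hn0 : ((n:ℝ)) ≠ 0 := by
    have : (0:ℝ) < (n:ℝ) := by exact_mod_cast Nat.lt_of_lt_of_le Nat.zero_lt_one hn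
    exact ne_of_gt this
  show (n:ℝ) * mraL n * (1/(n:ℝ)) = mraL n
  field_simp

lemma mra_lim_ps0 {σ : ℝ} (L g : ℝ) (hσ0 : 0 < σ) (hσ1 : σ < 1) :
    Tendsto (fun n : ℕ => mraPs σ L g n) atTop (𝓝 0) := by
  have h := ((mra_lim_d0 hσ0 hσ1).const_mul L).add (mra_lim_l0.const_mul g)
  simpa [mraPs] using h

lemma mra_lim_ratio : Tendsto (fun n : ℕ => ((n:ℝ)-1)/(n:ℝ)) atTop (𝓝 1) := by
  have h := tendsto_const_nhds.sub mra_inv_nat (f := fun _ : ℕ => (1:ℝ))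
  rw [sub_zero] at h
  refine h.congr' ?_
  filter_upwards [eventually_ge_atTop 1] with n hn
  have hn0 : ((n:ℝ)) ≠ 0 := by
    have : (0:ℝ) < (n:ℝ) := by exact_mod_cast Nat.lt_of_lt_of_le Nat.zero_lt_one hn
    exact ne_of_gt this
  show (1:ℝ) - 1/(n:ℝ) = ((n:ℝ)-1)/(n:ℝ)
  field_simp

lemma mra_lim_ratio' : Tendsto (fun n : ℕ => (n:ℝ)/((n:ℝ)-1)) atTop (𝓝 1) := by
  have h := mra_lim_ratio.inv₀ one_ne_zero
  rw [inv_one] at h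
  refine h.congr' ?_
  filter_upwards [eventually_ge_atTop 2] with n hn
  have hn2 : (2:ℝ) ≤ (n:ℝ) := by exact_mod_cast hn
  show (((n:ℝ)-1)/(n:ℝ))⁻¹ = (n:ℝ)/((n:ℝ)-1)
  rw [inv_div]

lemma mra_lim_ratio_pow (p : ℝ) :
    Tendsto (fun n : ℕ => (((n:ℝ)-1)/(n:ℝ))^p) atTop (𝓝 1) := by
  have hc : ContinuousAt (fun y : ℝ => y ^ p) 1 :=
    Real.continuousAt_rpow_const 1 p (Or.inl one_ne_zero)
  have h := hc.tendsto.comp mra_lim_ratio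
  simpa [Function.comp_def, Real.one_rpow] using h

lemma mra_cast_sub_one : ∀ᶠ n : ℕ in atTop, ((n-1:ℕ):ℝ) = (n:ℝ)-1 := by
  filter_upwards [eventually_ge_atTop 1] with n hn
  rw [Nat.cast_sub hn, Nat.cast_one]

lemma mra_lim_dA {σ : ℝ} (hσ0 : 0 < σ) (hσ1 : σ < 1) :
    Tendsto (fun n : ℕ => mraD σ (n-1) / (n:ℝ)^(σ-1)) atTop (𝓝 σ) := by
  have hS := (mra_lim_S hσ0 hσ1).comp (tendsto_sub_atTop_nat 1)
  have hR : Tendsto (fun n : ℕ => (((n-1:ℕ):ℝ)/(n:ℝ))^(σ-1)) atTop (𝓝 1) := by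
    refine (mra_lim_ratio_pow (σ-1)).congr' ?_
    filter_upwards [mra_cast_sub_one] with n hc
    rw [hc]
  have h := hS.mul hR
  rw [mul_one] at h
  refine h.congr' ?_
  filter_upwards [eventually_ge_atTop 2, mra_cast_sub_one] with n hn hc
  have hn0 : (0:ℝ) < (n:ℝ) := by positivity
  have hx : (0:ℝ) < ((n-1:ℕ):ℝ) := by
    rw [hc]
    have : (2:ℝ) ≤ (n:ℝ) := by exact_mod_cast hn
    linarith
  show ((n-1:ℕ):ℝ)^(1-σ) * mraD σ (n-1) * (((n-1:ℕ):ℝ)/(n:ℝ))^(σ-1)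
      = mraD σ (n-1) / (n:ℝ)^(σ-1)
  rw [Real.div_rpow hx.le hn0.le]
  have hxx : ((n-1:ℕ):ℝ)^(1-σ) * ((n-1:ℕ):ℝ)^(σ-1) = 1 := by
    rw [← Real.rpow_add hx]; norm_num
  calc ((n-1:ℕ):ℝ)^(1-σ) * mraD σ (n-1) * (((n-1:ℕ):ℝ)^(σ-1) / (n:ℝ)^(σ-1))
      = (((n-1:ℕ):ℝ)^(1-σ) * ((n-1:ℕ):ℝ)^(σ-1)) * mraD σ (n-1) / (n:ℝ)^(σ-1) := by
        ring
    _ = mraD σ (n-1) / (n:ℝ)^(σ-1) := by rw [hxx, one_mul]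

lemma mra_lim_lA {σ : ℝ} (hσ0 : 0 < σ) (hσ1 : σ < 1) :
    Tendsto (fun n : ℕ => mraL (n-1) / (n:ℝ)^(σ-1)) atTop (𝓝 0) := by
  have hl := mra_lim_lmul.comp (tendsto_sub_atTop_nat 1)
  -- (fun n => ((n-1:ℕ):ℝ) * mraL (n-1)) → 1
  have hz : Tendsto (fun n : ℕ => ((n:ℝ)/((n-1:ℕ):ℝ)) * (n:ℝ)^(-σ)) atTop (𝓝 0) := by
    have h := mra_lim_ratio'.mul (mra_pow_neg σ hσ0)
    rw [mul_zero] at h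
    refine h.congr' ?_
    filter_upwards [mra_cast_sub_one] with n hc
    rw [hc]
  have h := hl.mul hz
  rw [one_mul] at h
  refine h.congr' ?_
  filter_upwards [eventually_ge_atTop 2, mra_cast_sub_one] with n hn hc
  have hn0 : (0:ℝ) < (n:ℝ) := by positivity
  have hx : (0:ℝ) < ((n-1:ℕ):ℝ) := by
    rw [hc]
    have : (2:ℝ) ≤ (n:ℝ) := by exact_mod_cast hn
    linarith
  show ((n-1:ℕ):ℝ) * mraL (n-1) * (((n:ℝ)/((n-1:ℕ):ℝ)) * (n:ℝ)^(-σ))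
      = mraL (n-1) / (n:ℝ)^(σ-1)
  have h1 : (n:ℝ) * (n:ℝ)^(-σ) = ((n:ℝ)^(σ-1))⁻¹ := by
    rw [← Real.rpow_neg hn0.le, neg_sub]
    nth_rewrite 1 [← Real.rpow_one (n:ℝ)]
    rw [← Real.rpow_add hn0]
    norm_num
    rw [show (1:ℝ) + -σ = 1 - σ by ring]
  calc ((n-1:ℕ):ℝ) * mraL (n-1) * (((n:ℝ)/((n-1:ℕ):ℝ)) * (n:ℝ)^(-σ))
      = (((n-1:ℕ):ℝ)/((n-1:ℕ):ℝ)) * mraL (n-1) * ((n:ℝ) * (n:ℝ)^(-σ)) := by ring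
    _ = mraL (n-1) * ((n:ℝ)^(σ-1))⁻¹ := by
        rw [div_self (ne_of_gt hx), one_mul, h1]
    _ = mraL (n-1) / (n:ℝ)^(σ-1) := by rw [div_eq_mul_inv]

lemma mra_lim_psA {σ : ℝ} (L g : ℝ) (hσ0 : 0 < σ) (hσ1 : σ < 1) :
    Tendsto (fun n : ℕ => mraPs σ L g (n-1) / (n:ℝ)^(σ-1)) atTop (𝓝 (σ*L)) := by
  have h := ((mra_lim_dA hσ0 hσ1).const_mul L).add ((mra_lim_lA hσ0 hσ1).const_mul g)
  rw [mul_zero, add_zero] at h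
  rw [show L*σ = σ*L by ring] at h
  refine h.congr fun n => ?_
  show L * (mraD σ (n-1) / (n:ℝ)^(σ-1)) + g * (mraL (n-1) / (n:ℝ)^(σ-1))
      = mraPs σ L g (n-1) / (n:ℝ)^(σ-1)
  rw [mraPs]
  ring

lemma mra_lim_A {σ : ℝ} (L g : ℝ) (hσ0 : 0 < σ) (hσ1 : σ < 1) :
    Tendsto (fun n : ℕ => (mraPh σ L g (n-1) - 1) / (n:ℝ)^(σ-1)) atTop (𝓝 (σ*L)) := by
  have hps0 : Tendsto (fun n : ℕ => mraPs σ L g (n-1)) atTop (𝓝 0) :=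
    (mra_lim_ps0 L g hσ0 hσ1).comp (tendsto_sub_atTop_nat 1)
  have hrem : Tendsto
      (fun n : ℕ => (Real.exp (mraPs σ L g (n-1)) - 1 - mraPs σ L g (n-1)) / (n:ℝ)^(σ-1))
      atTop (𝓝 0) := by
    have ha : Tendsto (fun n : ℕ =>
        |mraPs σ L g (n-1) / (n:ℝ)^(σ-1)| * |mraPs σ L g (n-1)|) atTop (𝓝 0) := by
      have := (mra_lim_psA L g hσ0 hσ1).abs.mul hps0.abs
      simpa using this
    refine squeeze_zero_norm' ?_ ha
    have hsmall : ∀ᶠ n : ℕ in atTop, |mraPs σ L g (n-1)| ≤ 1 := by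
      have := hps0.abs
      simp only [abs_zero] at this
      filter_upwards [this.eventually_le_const (by norm_num : (0:ℝ) < 1)] with n hn
      exact hn
    filter_upwards [hsmall, eventually_ge_atTop 1] with n hn hn1
    have hn0 : (0:ℝ) < (n:ℝ) := by
      exact_mod_cast Nat.lt_of_lt_of_le Nat.zero_lt_one hn1
    have hq : (0:ℝ) < (n:ℝ)^(σ-1) := Real.rpow_pos_of_pos hn0 _
    have hb := Real.abs_exp_sub_one_sub_id_le hn
    rw [Real.norm_eq_abs, abs_div, abs_of_pos hq, abs_div, abs_of_pos hq]
    rw [div_mul_eq_mul_div]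
    rw [div_le_div_iff₀ hq hq]
    have h2 : mraPs σ L g (n-1)^2 = |mraPs σ L g (n-1)| * |mraPs σ L g (n-1)| := by
      rw [sq, abs_mul_abs_self]
    nlinarith [hb, hq.le, abs_nonneg (Real.exp (mraPs σ L g (n-1)) - 1 - mraPs σ L g (n-1))]
  have hsum := (mra_lim_psA L g hσ0 hσ1).add hrem
  rw [add_zero] at hsum
  refine hsum.congr fun n => ?_
  rw [mraPh]
  ring

lemma mra_lim_D {σ : ℝ} (hσ0 : 0 < σ) (hσ1 : σ < 1) :
    Tendsto (fun n : ℕ => (n:ℝ)^(2-σ) * (mraD σ n - mraD σ (n-1))) atTop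
      (𝓝 (σ*(σ-1))) := by
  have h := (mra_lhopital hσ0 hσ1).comp mra_T
  refine h.congr' ?_
  filter_upwards [eventually_ge_atTop 3, mra_cast_sub_one] with n hn hc
  have hn3 : (3:ℝ) ≤ (n:ℝ) := by exact_mod_cast hn
  have hn0 : (0:ℝ) < (n:ℝ) := by linarith
  have hnne : (n:ℝ) ≠ 0 := ne_of_gt hn0
  show (1 - 2*(1-1/(n:ℝ))^σ + (1-2*(1/(n:ℝ)))^σ)/(1/(n:ℝ))^2
      = (n:ℝ)^(2-σ) * (mraD σ n - mraD σ (n-1))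
  rw [mraD, mraD, hc]
  have e1 : ((n:ℝ)-1) = (n:ℝ) * (1 - 1/(n:ℝ)) := by field_simp
  have e2 : ((n:ℝ)-1-1) = (n:ℝ) * (1 - 2*(1/(n:ℝ))) := by field_simp; ring
  have p1 : (0:ℝ) ≤ 1 - 1/(n:ℝ) := by
    have : 1/(n:ℝ) ≤ 1 := by rw [div_le_one hn0]; linarith
    linarith
  have p2 : (0:ℝ) ≤ 1 - 2*(1/(n:ℝ)) := by
    have : 2*(1/(n:ℝ)) ≤ 1 := by rw [mul_one_div, div_le_one hn0]; linarith
    linarith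
  rw [e2, e1, Real.mul_rpow hn0.le p1, Real.mul_rpow hn0.le p2]
  have hpow : (n:ℝ)^(2-σ) * (n:ℝ)^σ = (n:ℝ)^2 := by
    rw [← Real.rpow_add hn0]
    norm_num
  calc (1 - 2*(1-1/(n:ℝ))^σ + (1-2*(1/(n:ℝ)))^σ)/(1/(n:ℝ))^2
      = (n:ℝ)^2 * (1 - 2*(1-1/(n:ℝ))^σ + (1-2*(1/(n:ℝ)))^σ) := by
        field_simp
    _ = ((n:ℝ)^(2-σ) * (n:ℝ)^σ) * (1 - 2*(1-1/(n:ℝ))^σ + (1-2*(1/(n:ℝ)))^σ) := by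
        rw [hpow]
    _ = (n:ℝ)^(2-σ) * ((n:ℝ)^σ - ((n:ℝ)^σ*(1-1/(n:ℝ))^σ)
          - ((n:ℝ)^σ*(1-1/(n:ℝ))^σ - (n:ℝ)^σ*(1-2*(1/(n:ℝ)))^σ)) := by ring

lemma mra_log_bound {u : ℝ} (hu0 : 0 < u) (hu : u ≤ 1/2) :
    |Real.log (1-u)| ≤ 2*u := by
  have h1 : (0:ℝ) < 1 - u := by linarith
  have h2 : Real.log (1-u) ≤ 0 := Real.log_nonpos (by linarith) (by linarith)
  rw [abs_of_nonpos h2]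
  have h3 : -Real.log (1-u) = Real.log (1-u)⁻¹ := (Real.log_inv _).symm
  rw [h3]
  have h4 := Real.log_le_sub_one_of_pos (inv_pos.mpr h1)
  have h5 : (1-u)⁻¹ - 1 ≤ 2*u := by
    rw [inv_eq_one_div, div_sub' (ne_of_gt h1)]
    rw [div_le_iff₀ h1]
    nlinarith
  linarith

lemma mra_lim_M {σ : ℝ} (hσ0 : 0 < σ) :
    Tendsto (fun n : ℕ => (n:ℝ)^(2-σ) * (mraL n - mraL (n-1))) atTop (𝓝 0) := by
  have ha : Tendsto (fun n : ℕ =>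
      2 * ((n:ℝ)^(-σ) * ((n:ℝ)/((n:ℝ)-1))^2)) atTop (𝓝 0) := by
    have := ((mra_pow_neg σ hσ0).mul (mra_lim_ratio'.pow 2)).const_mul 2
    simpa using this
  refine squeeze_zero_norm' ?_ ha
  filter_upwards [eventually_ge_atTop 3, mra_cast_sub_one] with n hn hc
  have hn3 : (3:ℝ) ≤ (n:ℝ) := by exact_mod_cast hn
  have hn0 : (0:ℝ) < (n:ℝ) := by linarith
  have h1 : (0:ℝ) < (n:ℝ)-1 := by linarith
  have h2 : (0:ℝ) < (n:ℝ)-2 := by linarith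
  have hu0 : (0:ℝ) < 1/((n:ℝ)-1)^2 := by positivity
  have hu : 1/((n:ℝ)-1)^2 ≤ 1/2 := by
    rw [div_le_div_iff₀ (by positivity) (by norm_num)]
    nlinarith
  -- M n = log(1 - u)
  have hM : mraL n - mraL (n-1) = Real.log (1 - 1/((n:ℝ)-1)^2) := by
    rw [mraL, mraL, hc]
    have he : (1:ℝ) - 1/((n:ℝ)-1)^2 = ((n:ℝ)/((n:ℝ)-1)) / (((n:ℝ)-1)/((n:ℝ)-1-1)) := by
      field_simp
      ring
    have l1 : ((n:ℝ)) ≠ 0 := ne_of_gt hn0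
    have l2 : ((n:ℝ)-1) ≠ 0 := ne_of_gt h1
    have l3 : ((n:ℝ)-1-1) ≠ 0 := by
      have : (0:ℝ) < (n:ℝ)-1-1 := by linarith
      exact ne_of_gt this
    rw [he, Real.log_div (div_ne_zero l1 l2) (div_ne_zero l2 l3), Real.log_div l1 l2]
  rw [hM]
  have hb := mra_log_bound hu0 hu
  have hq : (0:ℝ) < (n:ℝ)^(2-σ) := Real.rpow_pos_of_pos hn0 _
  rw [Real.norm_eq_abs, abs_mul, abs_of_pos hq]
  have hkey : (n:ℝ)^(2-σ) * (2*(1/((n:ℝ)-1)^2))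
      = 2 * ((n:ℝ)^(-σ) * ((n:ℝ)/((n:ℝ)-1))^2) := by
    have hpow : (n:ℝ)^(2-σ) = (n:ℝ)^(-σ) * (n:ℝ)^2 := by
      rw [← Real.rpow_natCast (n:ℝ) 2, ← Real.rpow_add hn0]
      norm_num
      rw [show (2:ℝ) - σ = -σ + 2 by ring]
    rw [hpow, div_pow]
    field_simp
  calc (n:ℝ)^(2-σ) * |Real.log (1 - 1/((n:ℝ)-1)^2)|
      ≤ (n:ℝ)^(2-σ) * (2*(1/((n:ℝ)-1)^2)) := by
        exact mul_le_mul_of_nonneg_left hb hq.le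
    _ = 2 * ((n:ℝ)^(-σ) * ((n:ℝ)/((n:ℝ)-1))^2) := hkey

lemma mra_lim_Dl {σ : ℝ} (L g : ℝ) (hσ0 : 0 < σ) (hσ1 : σ < 1) :
    Tendsto (fun n : ℕ => (n:ℝ)^(2-σ) * (mraPs σ L g n - mraPs σ L g (n-1))) atTop
      (𝓝 (σ*(σ-1)*L)) := by
  have h := ((mra_lim_D hσ0 hσ1).const_mul L).add ((mra_lim_M hσ0).const_mul g)
  rw [mul_zero, add_zero] at h
  rw [show L*(σ*(σ-1)) = σ*(σ-1)*L by ring] at h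
  refine h.congr fun n => ?_
  show L * ((n:ℝ)^(2-σ) * (mraD σ n - mraD σ (n-1)))
      + g * ((n:ℝ)^(2-σ) * (mraL n - mraL (n-1)))
      = (n:ℝ)^(2-σ) * (mraPs σ L g n - mraPs σ L g (n-1))
  rw [mraPs, mraPs]
  ring

lemma mra_lim_delta0 {σ : ℝ} (L g : ℝ) (hσ0 : 0 < σ) (hσ1 : σ < 1) :
    Tendsto (fun n : ℕ => mraPs σ L g n - mraPs σ L g (n-1)) atTop (𝓝 0) := by
  have h := (mra_lim_ps0 L g hσ0 hσ1).sub
    ((mra_lim_ps0 L g hσ0 hσ1).comp (tendsto_sub_atTop_nat 1))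
  simpa using h

lemma mra_lim_B {σ : ℝ} (L g : ℝ) (hσ0 : 0 < σ) (hσ1 : σ < 1) :
    Tendsto (fun n : ℕ => (n:ℝ)^(2-σ) * (mraPh σ L g n - mraPh σ L g (n-1))) atTop
      (𝓝 (σ*(σ-1)*L)) := by
  have hΔ0 := mra_lim_delta0 L g hσ0 hσ1
  have hΔ := mra_lim_Dl L g hσ0 hσ1
  -- step: n^(2-σ)(exp Δ - 1 - Δ) → 0
  have hrem : Tendsto (fun n : ℕ => (n:ℝ)^(2-σ) *
      (Real.exp (mraPs σ L g n - mraPs σ L g (n-1)) - 1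
        - (mraPs σ L g n - mraPs σ L g (n-1)))) atTop (𝓝 0) := by
    have ha : Tendsto (fun n : ℕ =>
        |(n:ℝ)^(2-σ) * (mraPs σ L g n - mraPs σ L g (n-1))|
          * |mraPs σ L g n - mraPs σ L g (n-1)|) atTop (𝓝 0) := by
      have := hΔ.abs.mul hΔ0.abs
      simpa using this
    refine squeeze_zero_norm' ?_ ha
    have hsmall : ∀ᶠ n : ℕ in atTop, |mraPs σ L g n - mraPs σ L g (n-1)| ≤ 1 := by
      have h2 := hΔ0.abs
      simp only [abs_zero] at h2
      exact h2.eventually_le_const (by norm_num : (0:ℝ) < 1)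
    filter_upwards [hsmall, eventually_ge_atTop 1] with n hn hn1
    have hn0 : (0:ℝ) < (n:ℝ) := by
      exact_mod_cast Nat.lt_of_lt_of_le Nat.zero_lt_one hn1
    have hq : (0:ℝ) < (n:ℝ)^(2-σ) := Real.rpow_pos_of_pos hn0 _
    set Δ := mraPs σ L g n - mraPs σ L g (n-1) with hΔdef
    have hb := Real.abs_exp_sub_one_sub_id_le hn
    rw [Real.norm_eq_abs, abs_mul, abs_of_pos hq, abs_mul, abs_of_pos hq, mul_assoc]
    refine mul_le_mul_of_nonneg_left ?_ hq.le
    have h2 : Δ^2 = |Δ| * |Δ| := by rw [sq, abs_mul_abs_self]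
    calc |Real.exp Δ - 1 - Δ| ≤ Δ^2 := hb
      _ = |Δ| * |Δ| := h2
  have hstep : Tendsto (fun n : ℕ => (n:ℝ)^(2-σ) *
      (Real.exp (mraPs σ L g n - mraPs σ L g (n-1)) - 1)) atTop (𝓝 (σ*(σ-1)*L)) := by
    have h := hΔ.add hrem
    rw [add_zero] at h
    refine h.congr fun n => ?_
    ring
  have hE : Tendsto (fun n : ℕ => Real.exp (mraPs σ L g (n-1))) atTop (𝓝 1) := by
    have h := (Real.continuous_exp.tendsto 0).comp
      ((mra_lim_ps0 L g hσ0 hσ1).comp (tendsto_sub_atTop_nat 1))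
    simpa [Function.comp_def] using h
  have h := hE.mul hstep
  rw [one_mul] at h
  refine h.congr fun n => ?_
  show Real.exp (mraPs σ L g (n-1)) * ((n:ℝ)^(2-σ) *
      (Real.exp (mraPs σ L g n - mraPs σ L g (n-1)) - 1))
      = (n:ℝ)^(2-σ) * (mraPh σ L g n - mraPh σ L g (n-1))
  have hexp : Real.exp (mraPs σ L g (n-1))
      * Real.exp (mraPs σ L g n - mraPs σ L g (n-1)) = Real.exp (mraPs σ L g n) := by
    rw [← Real.exp_add]
    ring_nf
  rw [mraPh, mraPh]
  calc Real.exp (mraPs σ L g (n-1)) * ((n:ℝ)^(2-σ) *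
      (Real.exp (mraPs σ L g n - mraPs σ L g (n-1)) - 1))
      = (n:ℝ)^(2-σ) * (Real.exp (mraPs σ L g (n-1))
          * Real.exp (mraPs σ L g n - mraPs σ L g (n-1))
          - Real.exp (mraPs σ L g (n-1))) := by ring
    _ = (n:ℝ)^(2-σ) * (Real.exp (mraPs σ L g n) - Real.exp (mraPs σ L g (n-1))) := by
        rw [hexp]


/-- If `a n = c · μ^n · κ^(n^σ) · n^g` with `μ > 0`, `0 < κ < 1`, `0 < σ < 1`,
then the modified ratio `r¹ n = n·r n − (n−1)·r (n−1)`, where `r n = a n / a (n-1)`,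
satisfies `r¹ n = μ (1 + σ² log κ · n^(σ−1) + o(n^(σ−1)))`; in particular the
`O(1/n)` term coming from `n^g` is eliminated. -/
theorem modified_ratio_asymptotics (a : ℕ → ℝ) (cst μ κ σ g : ℝ)
    (hcst : 0 < cst) (hμ : 0 < μ) (hκ0 : 0 < κ) (hκ1 : κ < 1)
    (hσ0 : 0 < σ) (hσ1 : σ < 1)
    (ha : ∀ n : ℕ, 1 ≤ n → a n = cst * μ ^ n * κ ^ ((n : ℝ) ^ σ) * (n : ℝ) ^ g)
    (r : ℕ → ℝ) (hr : ∀ n, r n = a n / a (n - 1))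
    (r1 : ℕ → ℝ) (hr1 : ∀ n, r1 n = (n : ℝ) * r n - ((n : ℝ) - 1) * r (n - 1)) :
    ∃ e : ℕ → ℝ,
      (∀ n : ℕ, 3 ≤ n →
        r1 n = μ * (1 + σ ^ 2 * Real.log κ * (n : ℝ) ^ (σ - 1) + e n)) ∧
      Filter.Tendsto (fun n : ℕ => e n / (n : ℝ) ^ (σ - 1)) Filter.atTop (nhds 0) := by
  have hμ' : μ ≠ 0 := ne_of_gt hμ
  set L : ℝ := Real.log κ with hLdef
  -- ratio formula
  have hrφ : ∀ m : ℕ, 2 ≤ m → r m = μ * mraPh σ L g m := by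
    intro m hm
    have hm1 : 1 ≤ m := by omega
    have hc : ((m-1:ℕ):ℝ) = (m:ℝ)-1 := by rw [Nat.cast_sub hm1, Nat.cast_one]
    have hm2 : (2:ℝ) ≤ (m:ℝ) := by exact_mod_cast hm
    have hmpos : (0:ℝ) < (m:ℝ) := by linarith
    have hm1pos : (0:ℝ) < (m:ℝ)-1 := by linarith
    rw [hr m, ha m hm1, ha (m-1) (by omega), hc]
    have hμm : μ^m = μ^(m-1) * μ := by
      conv_lhs => rw [show m = (m-1)+1 by omega]
      rw [pow_succ]
    rw [hμm]
    rw [Real.rpow_def_of_pos hκ0 ((m:ℝ)^σ), Real.rpow_def_of_pos hκ0 (((m:ℝ)-1)^σ),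
      Real.rpow_def_of_pos hmpos g, Real.rpow_def_of_pos hm1pos g]
    rw [mraPh, mraPs, mraD, mraL,
      Real.log_div (ne_of_gt hmpos) (ne_of_gt hm1pos)]
    have hden : cst * μ^(m-1) * Real.exp (Real.log κ * ((m:ℝ)-1)^σ)
        * Real.exp (Real.log ((m:ℝ)-1) * g) ≠ 0 := by positivity
    rw [div_eq_iff hden]
    have hexp : Real.exp (L * ((m:ℝ)^σ - ((m:ℝ)-1)^σ)
          + g * (Real.log (m:ℝ) - Real.log ((m:ℝ)-1)))
        * (Real.exp (Real.log κ * ((m:ℝ)-1)^σ) * Real.exp (Real.log ((m:ℝ)-1) * g))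
        = Real.exp (Real.log κ * (m:ℝ)^σ) * Real.exp (Real.log (m:ℝ) * g) := by
      rw [← Real.exp_add, ← Real.exp_add, ← Real.exp_add]
      rw [hLdef]
      ring_nf
    linear_combination (-(cst * μ^(m-1) * μ)) * hexp
  -- r1 formula
  refine ⟨fun n => r1 n / μ - 1 - σ^2*L*(n:ℝ)^(σ-1), ?_, ?_⟩
  · intro n hn
    field_simp
    ring
  · have hkey := ((mra_lim_B L g hσ0 hσ1).sub_const (σ*(σ-1)*L)).add
      ((mra_lim_A L g hσ0 hσ1).sub_const (σ*L))
    rw [sub_self, sub_self, add_zero] at hkey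
    refine hkey.congr' ?_
    filter_upwards [eventually_ge_atTop 3] with n hn
    have hn3 : (3:ℝ) ≤ (n:ℝ) := by exact_mod_cast hn
    have hn0 : (0:ℝ) < (n:ℝ) := by linarith
    have hq : (0:ℝ) < (n:ℝ)^(σ-1) := Real.rpow_pos_of_pos hn0 _
    have hqn : (n:ℝ)^(σ-1) ≠ 0 := ne_of_gt hq
    have hr1n : r1 n = μ * ((n:ℝ) * mraPh σ L g n - ((n:ℝ)-1) * mraPh σ L g (n-1)) := by
      rw [hr1 n, hrφ n (by omega), hrφ (n-1) (by omega)]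
      ring
    have hpow : (n:ℝ)^(2-σ) * (n:ℝ)^(σ-1) = (n:ℝ) := by
      rw [← Real.rpow_add hn0]
      norm_num
    show (n:ℝ)^(2-σ) * (mraPh σ L g n - mraPh σ L g (n-1)) - σ*(σ-1)*L
        + ((mraPh σ L g (n-1) - 1)/(n:ℝ)^(σ-1) - σ*L)
        = (r1 n / μ - 1 - σ^2*L*(n:ℝ)^(σ-1)) / (n:ℝ)^(σ-1)
    rw [hr1n, mul_div_cancel_left₀ _ hμ']
    field_simp
    linear_combination (mraPh σ L g n - mraPh σ L g (n-1)) * hpow
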